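/- Let Q be a quiver and let C and C' be subsets of Q₁. Then the following are equivalent: (a) C and C' are compatible, i.e. g_C(p) = g_{C'}(p) for every cyclic walk p in Q; (b) there exists an isomorphism of quivers f: ℤ(Q,C) → ℤ(Q,C') such that π ∘ f = π and f ∘ τ = τ ∘ f. -/

import Mathlib

/-- A quiver given by a (finite) set of vertices `V`, a set of arrows `A`,
and source/target maps `s`, `t`. -/
structure PreQuiver where
  V : Type
  A : Type
  s : A → V
  t : A → V

namespace PreQuiver

variable (Q : PreQuiver)

/-- A step of a walk: an arrow of the double quiver, i.e. an arrow of `Q`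
together with an orientation (`true` = the arrow itself, `false` = its formal inverse). -/
abbrev Step := Q.A × Bool

/-- The source of a step in the double quiver. -/
def stepSrc (e : Q.Step) : Q.V := if e.2 then Q.s e.1 else Q.t e.1

/-- The target of a step in the double quiver. -/
def stepTgt (e : Q.Step) : Q.V := if e.2 then Q.t e.1 else Q.s e.1

/-- `Q.IsWalk x y l` : the list of steps `l` is a walk from `x` to `y`
(i.e. a path in the double quiver). -/
def IsWalk : Q.V → Q.V → List Q.Step → Prop
  | x, y, [] => x = y
  | x, y, e :: l => Q.stepSrc e = x ∧ IsWalk (Q.stepTgt e) y l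

/-- `Q.IsPath x y l` : the list of arrows `l` is a path of arrows from `x` to `y`. -/
def IsPath : Q.V → Q.V → List Q.A → Prop
  | x, y, [] => x = y
  | x, y, a :: l => Q.s a = x ∧ IsPath (Q.t a) y l

/-- The degree `g_C(a)` of an arrow: `1` if `a ∈ C` and `0` otherwise. -/
noncomputable def gA (C : Set Q.A) (a : Q.A) : ℤ :=
  haveI := Classical.propDecidable (a ∈ C)
  if a ∈ C then 1 else 0

/-- The degree of a step: `g_C(a)` for `a` and `-g_C(a)` for `a⁻¹`. -/
noncomputable def gStep (C : Set Q.A) (e : Q.Step) : ℤ :=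
  if e.2 then Q.gA C e.1 else -Q.gA C e.1

/-- The degree `g_C(p)` of a walk, extended additively. -/
noncomputable def gWalk (C : Set Q.A) (l : List Q.Step) : ℤ := (l.map (Q.gStep C)).sum

/-- The degree `g_C(p)` of a path of arrows. -/
noncomputable def gPath (C : Set Q.A) (l : List Q.A) : ℤ := (l.map (Q.gA C)).sum

/-- Two sets of arrows are compatible if they give every cyclic walk the same degree. -/
def Compatible (C C' : Set Q.A) : Prop :=
  ∀ (x : Q.V) (l : List Q.Step), Q.IsWalk x x l → Q.gWalk C l = Q.gWalk C' l

/-- A quiver is connected if any two vertices are joined by a walk. -/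
def Connected : Prop := ∀ x y : Q.V, ∃ l : List Q.Step, Q.IsWalk x y l

/-- The covering quiver `ℤ(Q,C)`: vertices `Q₀ × ℤ`; for an arrow `a : x → y` and `ℓ ∈ ℤ`,
an arrow `(a,ℓ) : (x,ℓ) → (y,ℓ)` if `a ∉ C` and `(a,ℓ) : (x,ℓ) → (y,ℓ-1)` if `a ∈ C`. -/
noncomputable def cover (C : Set Q.A) : PreQuiver where
  V := Q.V × ℤ
  A := Q.A × ℤ
  s := fun e => (Q.s e.1, e.2)
  t := fun e => (Q.t e.1, e.2 - Q.gA C e.1)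

end PreQuiver

/-- An isomorphism of quivers: bijections on vertices and arrows commuting with
source and target maps. -/
structure QuivIso (Q₁ Q₂ : PreQuiver) where
  onV : Q₁.V ≃ Q₂.V
  onA : Q₁.A ≃ Q₂.A
  map_s : ∀ a : Q₁.A, Q₂.s (onA a) = onV (Q₁.s a)
  map_t : ∀ a : Q₁.A, Q₂.t (onA a) = onV (Q₁.t a)

-- auxiliary development
namespace PreQuiver
variable (Q : PreQuiver)

def stepInv (e : Q.Step) : Q.Step := (e.1, !e.2)

@[simp] lemma stepSrc_inv (e : Q.Step) : Q.stepSrc (Q.stepInv e) = Q.stepTgt e := by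
  cases e with | mk a b => cases b <;> simp [stepInv, stepSrc, stepTgt]

@[simp] lemma stepTgt_inv (e : Q.Step) : Q.stepTgt (Q.stepInv e) = Q.stepSrc e := by
  cases e with | mk a b => cases b <;> simp [stepInv, stepSrc, stepTgt]

@[simp] lemma gStep_inv (C : Set Q.A) (e : Q.Step) :
    Q.gStep C (Q.stepInv e) = -Q.gStep C e := by
  cases e with | mk a b => cases b <;> simp [stepInv, gStep]

lemma isWalk_append {x y z : Q.V} {l m : List Q.Step}
    (h1 : Q.IsWalk x y l) (h2 : Q.IsWalk y z m) : Q.IsWalk x z (l ++ m) := by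
  induction l generalizing x with
  | nil => cases h1; simpa using h2
  | cons e l ih => exact ⟨h1.1, ih h1.2⟩

lemma isWalk_reverse {x y : Q.V} {l : List Q.Step} (h : Q.IsWalk x y l) :
    Q.IsWalk y x (l.reverse.map Q.stepInv) := by
  induction l generalizing x with
  | nil => cases h; simp [IsWalk]
  | cons e l ih =>
      simp only [List.reverse_cons, List.map_append, List.map_cons, List.map_nil]
      exact Q.isWalk_append (ih h.2) ⟨by simp, by simp [IsWalk, h.1]⟩

@[simp] lemma gWalk_cons (C : Set Q.A) (e : Q.Step) (l : List Q.Step) :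
    Q.gWalk C (e :: l) = Q.gStep C e + Q.gWalk C l := by simp [gWalk]

@[simp] lemma gWalk_append (C : Set Q.A) (l m : List Q.Step) :
    Q.gWalk C (l ++ m) = Q.gWalk C l + Q.gWalk C m := by
  simp [gWalk]

@[simp] lemma gWalk_reverse_inv (C : Set Q.A) (l : List Q.Step) :
    Q.gWalk C (l.reverse.map Q.stepInv) = -Q.gWalk C l := by
  induction l with
  | nil => simp [gWalk]
  | cons e l ih => simp [gWalk] at *; omega

lemma telescope (C C' : Set Q.A) (h : Q.V → ℤ)
    (harr : ∀ a : Q.A, Q.gA C a - Q.gA C' a = h (Q.t a) - h (Q.s a)) :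
    ∀ (l : List Q.Step) (x y : Q.V), Q.IsWalk x y l →
      Q.gWalk C l - Q.gWalk C' l = h y - h x := by
  intro l
  induction l with
  | nil => intro x y hw; cases hw; simp [gWalk]
  | cons e l ih =>
      intro x y hw
      have hstep : Q.gStep C e - Q.gStep C' e = h (Q.stepTgt e) - h (Q.stepSrc e) := by
        cases e with | mk a b =>
          cases b <;> simp [gStep, stepSrc, stepTgt] <;> have := harr a <;> omega
      have := ih (Q.stepTgt e) y hw.2
      have hx : Q.stepSrc e = x := hw.1
      simp only [gWalk, List.map_cons, List.sum_cons] at *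
      rw [← hx]; omega

/-- Reachability in the double quiver. -/
def Reach (x y : Q.V) : Prop := ∃ l, Q.IsWalk x y l

lemma reach_equiv : Equivalence Q.Reach :=
  ⟨fun x => ⟨[], rfl⟩,
   fun ⟨l, hl⟩ => ⟨_, Q.isWalk_reverse hl⟩,
   fun ⟨l, hl⟩ ⟨m, hm⟩ => ⟨l ++ m, Q.isWalk_append hl hm⟩⟩

end PreQuiver


/-- For subsets `C, C' ⊆ Q₁` the following are equivalent:
(a) `C` and `C'` are compatible (`g_C(p) = g_{C'}(p)` for every cyclic walk `p`);
(b) there is an isomorphism of quivers `f : ℤ(Q,C) → ℤ(Q,C')` with `π ∘ f = π`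
and `f ∘ τ = τ ∘ f` (on vertices and on arrows). -/
theorem stmt_3 (Q : PreQuiver) [Finite Q.V] [Finite Q.A] (C C' : Set Q.A) :
    Q.Compatible C C' ↔
      ∃ f : QuivIso (Q.cover C) (Q.cover C'),
        (∀ v : Q.V × ℤ, (f.onV v).1 = v.1) ∧
        (∀ e : Q.A × ℤ, (f.onA e).1 = e.1) ∧
        (∀ v : Q.V × ℤ, f.onV (v.1, v.2 + 1) = ((f.onV v).1, (f.onV v).2 + 1)) ∧
        (∀ e : Q.A × ℤ, f.onA (e.1, e.2 + 1) = ((f.onA e).1, (f.onA e).2 + 1)) := by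
  constructor
  · -- forward: compatible → iso
    intro hc
    classical
    letI st : Setoid Q.V := ⟨Q.Reach, Q.reach_equiv⟩
    set rep : Q.V → Q.V := fun x => (Quotient.mk st x).out with hrep
    have hreach : ∀ x : Q.V, Q.Reach (rep x) x := fun x =>
      Quotient.exact ((Quotient.mk st x).out_eq)
    set h : Q.V → ℤ := fun x =>
      Q.gWalk C (Classical.choose (hreach x)) - Q.gWalk C' (Classical.choose (hreach x))
      with hh
    have harr : ∀ a : Q.A, Q.gA C a - Q.gA C' a = h (Q.t a) - h (Q.s a) := by
      intro a
      have hst : Q.Reach (Q.s a) (Q.t a) := ⟨[(a, true)], by simp [PreQuiver.IsWalk, PreQuiver.stepSrc, PreQuiver.stepTgt]⟩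
      have hrr : rep (Q.s a) = rep (Q.t a) := by
        simp only [hrep]
        congr 1
        exact Quotient.sound hst
      obtain ⟨w1, hw1⟩ : ∃ w, Q.IsWalk (rep (Q.s a)) (Q.s a) w :=
        ⟨_, Classical.choose_spec (hreach (Q.s a))⟩
      -- use the chosen walks directly
      set w1 := Classical.choose (hreach (Q.s a)) with hw1def
      set w2 := Classical.choose (hreach (Q.t a)) with hw2def
      have hw1 : Q.IsWalk (rep (Q.s a)) (Q.s a) w1 := Classical.choose_spec (hreach (Q.s a))
      have hw2 : Q.IsWalk (rep (Q.t a)) (Q.t a) w2 := Classical.choose_spec (hreach (Q.t a))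
      set c : List Q.Step := w1 ++ ((a, true) :: (w2.reverse.map Q.stepInv)) with hc'
      have hcyc : Q.IsWalk (rep (Q.s a)) (rep (Q.s a)) c := by
        apply Q.isWalk_append hw1
        refine ⟨rfl, ?_⟩
        have := Q.isWalk_reverse hw2
        rw [hrr]
        simpa [PreQuiver.stepTgt] using this
      have := hc _ _ hcyc
      simp only [hc', PreQuiver.gWalk_append, PreQuiver.gWalk_cons,
        PreQuiver.gWalk_reverse_inv] at this
      have hg : Q.gStep C (a, true) = Q.gA C a := by simp [PreQuiver.gStep]
      have hg' : Q.gStep C' (a, true) = Q.gA C' a := by simp [PreQuiver.gStep]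
      rw [hg, hg'] at this
      have hhs : h (Q.s a) = Q.gWalk C w1 - Q.gWalk C' w1 := rfl
      have hht : h (Q.t a) = Q.gWalk C w2 - Q.gWalk C' w2 := rfl
      rw [hhs, hht]
      omega
    refine ⟨⟨⟨fun v => (v.1, v.2 + h v.1), fun v => (v.1, v.2 - h v.1),
        fun v => by simp <;> rfl, fun v => by simp <;> rfl⟩,
      ⟨fun e => (e.1, e.2 + h (Q.s e.1)), fun e => (e.1, e.2 - h (Q.s e.1)),
        fun e => by simp <;> rfl, fun e => by simp <;> rfl⟩, ?_, ?_⟩, ?_, ?_, ?_, ?_⟩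
    · intro e; rfl
    · intro e
      show ((Q.t e.1, e.2 + h (Q.s e.1) - Q.gA C' e.1) : Q.V × ℤ)
          = (Q.t e.1, e.2 - Q.gA C e.1 + h (Q.t e.1))
      have := harr e.1
      refine Prod.ext rfl ?_
      simp only
      omega
    · intro v; rfl
    · intro e; rfl
    · intro v
      show ((v.1, v.2 + 1 + h v.1) : Q.V × ℤ) = (v.1, v.2 + h v.1 + 1)
      refine Prod.ext rfl (by ring)
    · intro e
      show ((e.1, e.2 + 1 + h (Q.s e.1)) : Q.A × ℤ) = (e.1, e.2 + h (Q.s e.1) + 1)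
      refine Prod.ext rfl (by ring)
  · -- backward: iso → compatible
    rintro ⟨f, hV1, hA1, hV2, hA2⟩
    set h : Q.V → ℤ := fun x => (f.onV (x, 0)).2 with hh
    have hV : ∀ (x : Q.V) (ℓ : ℤ), f.onV (x, ℓ) = (x, ℓ + h x) := by
      intro x ℓ
      induction ℓ using Int.induction_on with
      | zero => exact Prod.ext (hV1 (x, 0)) (by simp [hh])
      | succ n ih =>
          have := hV2 (x, (n : ℤ))
          simp only at this
          rw [this, ih]
          refine Prod.ext rfl (by push_cast; ring)
      | pred n ih =>
          have := hV2 (x, (-(n : ℤ) - 1))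
          simp only at this
          have h2 : ((-(n:ℤ) - 1) + 1) = -(n:ℤ) := by ring
          rw [h2] at this
          rw [ih] at this
          have e1 : (f.onV (x, -(n:ℤ) - 1)).1 = x := hV1 _
          have e2 : (f.onV (x, -(n:ℤ) - 1)).2 = -(n:ℤ) - 1 + h x := by
            have := congrArg Prod.snd this
            simp only at this
            omega
          exact Prod.ext e1 e2
    have harr : ∀ a : Q.A, Q.gA C a - Q.gA C' a = h (Q.t a) - h (Q.s a) := by
      intro a
      have hs := f.map_s (a, 0)
      have ht := f.map_t (a, 0)
      have hfa1 : (f.onA (a, 0)).1 = a := hA1 _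
      -- source equation
      have hs' : ((Q.s a, (f.onA (a, 0)).2) : Q.V × ℤ) = (Q.s a, 0 + h (Q.s a)) := by
        have : (Q.cover C').s (f.onA (a, 0)) = (Q.s (f.onA (a,0)).1, (f.onA (a,0)).2) := rfl
        rw [this, hfa1] at hs
        rw [hs]
        have : (Q.cover C).s (a, 0) = ((Q.s a, 0) : Q.V × ℤ) := rfl
        rw [this, hV]
      have hk : (f.onA (a, 0)).2 = h (Q.s a) := by
        have := congrArg Prod.snd hs'; simpa using this
      have ht' : ((Q.t a, (f.onA (a,0)).2 - Q.gA C' a) : Q.V × ℤ)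
          = (Q.t a, 0 - Q.gA C a + h (Q.t a)) := by
        have e1 : (Q.cover C').t (f.onA (a, 0))
            = (Q.t (f.onA (a,0)).1, (f.onA (a,0)).2 - Q.gA C' (f.onA (a,0)).1) := rfl
        rw [e1, hfa1] at ht
        rw [ht]
        have e2 : (Q.cover C).t (a, 0) = ((Q.t a, 0 - Q.gA C a) : Q.V × ℤ) := rfl
        rw [e2, hV]
      have := congrArg Prod.snd ht'
      simp only at this
      omega
    intro x l hw
    have := Q.telescope C C' h harr l x x hw
    omega
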